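/- Per-coordinate dual ascent bound: fix i ∈ {1,…,n} and let Δ_i ∈ ℝ maximize the one-dimensional subproblem Δ ↦ −φ_i*(−(α_i + Δ)) − (A_iᵀw)·Δ − (v_i/(2λn))·Δ². Then for every s ∈ [0,1]: D(α + Δ_i e_i) − D(α) ≥ (s/n)·[φ_i*(−α_i) − φ_i*(φ_i′(A_iᵀw)) + (A_iᵀw)·κ_i] − (s²·v_i·κ_i²)/(2λn²) + (γ·s(1−s)·κ_i²)/(2n), where e_i is the i-th standard basis vector and κ_i = α_i + φ_i′(A_iᵀw). -/

import Mathlib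

open scoped BigOperators InnerProductSpace


lemma mono_aux (h h' : ℝ → ℝ) (hder : ∀ t, HasDerivAt h (h' t) t)
    (hpos : ∀ t ∈ Set.Icc (0:ℝ) 1, 0 ≤ h' t) : h 0 ≤ h 1 := by
  have hdiff : Differentiable ℝ h := fun t => (hder t).differentiableAt
  have := monotoneOn_of_deriv_nonneg (convex_Icc (0:ℝ) 1)
    hdiff.continuous.continuousOn (hdiff.differentiableOn)
    (fun t ht => by
      rw [(hder t).deriv]
      exact hpos t (interior_subset ht))
  exact this (by norm_num) (by norm_num) zero_le_one

/-- 1-D descent lemma. -/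
lemma descent1 (gam : ℝ) (hgam : 0 < gam) (f f' : ℝ → ℝ)
    (hd : ∀ x, HasDerivAt f (f' x) x)
    (hl : ∀ a b : ℝ, |f' a - f' b| ≤ (1 / gam) * |a - b|)
    (x a : ℝ) : f (x + a) ≤ f x + f' x * a + a ^ 2 / (2 * gam) := by
  set h : ℝ → ℝ := fun t => f x + f' x * (t * a) + t ^ 2 * (a ^ 2 / (2 * gam)) - f (x + t * a)
    with hh
  have key : h 0 ≤ h 1 := by
    apply mono_aux h (fun t => f' x * a + 2 * t * (a ^ 2 / (2 * gam)) - f' (x + t * a) * a)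
    · intro t
      have hline : HasDerivAt (fun t : ℝ => x + t * a) a t := by
        simpa using ((hasDerivAt_id t).mul_const a).const_add x
      have hcomp : HasDerivAt (fun t : ℝ => f (x + t * a)) (f' (x + t * a) * a) t :=
        (hd (x + t * a)).comp t hline
      have h1 : HasDerivAt (fun t : ℝ => f x + f' x * (t * a) + t ^ 2 * (a ^ 2 / (2 * gam)))
          (f' x * a + 2 * t * (a ^ 2 / (2 * gam))) t := by
        have := (((hasDerivAt_id t).mul_const a).const_mul (f' x)).add
          ((hasDerivAt_pow 2 t).mul_const (a ^ 2 / (2 * gam)))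
        have := this.const_add (f x)
        exact (this.congr_deriv (by norm_num)).congr_of_eventuallyEq
          (Filter.Eventually.of_forall fun u => by simp only [id, Pi.add_apply]; ring)
      exact h1.sub hcomp
    · intro t ht
      have hb := hl (x + t * a) x
      have : |f' (x + t * a) - f' x| ≤ (1 / gam) * (t * |a|) := by
        calc |f' (x + t * a) - f' x| ≤ (1 / gam) * |x + t * a - x| := hb
        _ = (1 / gam) * (|t| * |a|) := by rw [show x + t * a - x = t * a by ring, abs_mul]
        _ = (1 / gam) * (t * |a|) := by rw [abs_of_nonneg ht.1]
      have h2 : (f' x - f' (x + t * a)) * a ≥ -((1 / gam) * (t * |a|) * |a|) := by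
        have h3 : |(f' x - f' (x + t * a)) * a| ≤ (1 / gam) * (t * |a|) * |a| := by
          rw [abs_mul, abs_sub_comm]
          exact mul_le_mul_of_nonneg_right this (abs_nonneg a)
        linarith [neg_abs_le ((f' x - f' (x + t * a)) * a)]
      have haa : |a| * |a| = a ^ 2 := by rw [← abs_mul, abs_mul_self]; ring
      have hga : 0 < gam := hgam
      have h4 : (1 / gam) * (t * |a|) * |a| = t * a ^ 2 / gam := by
        have e : (1 / gam) * (t * |a|) * |a| = (1 / gam) * t * (|a| * |a|) := by ring
        rw [e, haa]; ring
      rw [h4] at h2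
      have : 2 * t * (a ^ 2 / (2 * gam)) = t * a ^ 2 / gam := by field_simp
      linarith
  simpa [hh] using key

/-- Vector descent lemma for a function with 1-Lipschitz gradient. -/
lemma descent2 {d : ℕ} (gs : EuclideanSpace ℝ (Fin d) → ℝ)
    (gs' : EuclideanSpace ℝ (Fin d) → EuclideanSpace ℝ (Fin d))
    (hgs' : ∀ z, HasGradientAt gs (gs' z) z)
    (hlip : LipschitzWith 1 gs')
    (z h : EuclideanSpace ℝ (Fin d)) :
    gs (z + h) ≤ gs z + ⟪gs' z, h⟫_ℝ + ‖h‖ ^ 2 / 2 := by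
  set H : ℝ → ℝ := fun t => gs z + t * ⟪gs' z, h⟫_ℝ + t ^ 2 * (‖h‖ ^ 2 / 2) - gs (z + t • h)
    with hH
  have key : H 0 ≤ H 1 := by
    apply mono_aux H
      (fun t => ⟪gs' z, h⟫_ℝ + 2 * t * (‖h‖ ^ 2 / 2) - ⟪gs' (z + t • h), h⟫_ℝ)
    · intro t
      have hline : HasDerivAt (fun t : ℝ => z + t • h) h t := by
        simpa using ((hasDerivAt_id t).smul_const h).const_add z
      have hcomp : HasDerivAt (fun t : ℝ => gs (z + t • h)) (⟪gs' (z + t • h), h⟫_ℝ) t := by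
        have := ((hgs' (z + t • h)).hasFDerivAt).comp_hasDerivAt t hline
        simp [InnerProductSpace.toDual_apply_apply] at this
        exact this
      have h1 : HasDerivAt (fun t : ℝ => gs z + t * ⟪gs' z, h⟫_ℝ + t ^ 2 * (‖h‖ ^ 2 / 2))
          (⟪gs' z, h⟫_ℝ + 2 * t * (‖h‖ ^ 2 / 2)) t := by
        have := (((hasDerivAt_id t).mul_const (⟪gs' z, h⟫_ℝ))).add
          ((hasDerivAt_pow 2 t).mul_const (‖h‖ ^ 2 / 2))
        have := this.const_add (gs z)
        exact (this.congr_deriv (by norm_num)).congr_of_eventuallyEq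
          (Filter.Eventually.of_forall fun u => by simp only [id, Pi.add_apply]; ring)
      exact h1.sub hcomp
    · intro t ht
      have hdist : ‖gs' (z + t • h) - gs' z‖ ≤ t * ‖h‖ := by
        have := hlip.dist_le_mul (z + t • h) z
        simp only [NNReal.coe_one, one_mul, dist_eq_norm] at this
        calc ‖gs' (z + t • h) - gs' z‖ ≤ ‖z + t • h - z‖ := this
        _ = ‖t • h‖ := by congr 1; abel
        _ = |t| * ‖h‖ := by rw [norm_smul]; rfl
        _ = t * ‖h‖ := by rw [abs_of_nonneg ht.1]
      have hcs : |⟪gs' (z + t • h) - gs' z, h⟫_ℝ| ≤ (t * ‖h‖) * ‖h‖ :=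
        le_trans (abs_real_inner_le_norm _ _) (mul_le_mul_of_nonneg_right hdist (norm_nonneg _))
      have hinner : ⟪gs' (z + t • h), h⟫_ℝ - ⟪gs' z, h⟫_ℝ = ⟪gs' (z + t • h) - gs' z, h⟫_ℝ := by
        rw [inner_sub_left]
      have h5 : 2 * t * (‖h‖ ^ 2 / 2) = (t * ‖h‖) * ‖h‖ := by ring
      have hub : ⟪gs' (z + t • h) - gs' z, h⟫_ℝ ≤ (t * ‖h‖) * ‖h‖ :=
        le_trans (le_abs_self _) hcs
      linarith
  simpa [hH] using key

/-- Strong convexity of the conjugate of a smooth function. -/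
lemma conj_sc (gam : ℝ) (hgam : 0 < gam) (f f' : ℝ → ℝ)
    (hd : ∀ x, HasDerivAt f (f' x) x)
    (hl : ∀ a b : ℝ, |f' a - f' b| ≤ (1 / gam) * |a - b|)
    (fs : ℝ → ℝ) (hfs : ∀ u, IsLUB (Set.range fun x : ℝ => x * u - f x) (fs u))
    (p q s : ℝ) (hs0 : 0 ≤ s) (hs1 : s ≤ 1) :
    fs ((1 - s) * p + s * q) ≤ (1 - s) * fs p + s * fs q - gam / 2 * s * (1 - s) * (p - q) ^ 2 := by
  refine ((hfs ((1 - s) * p + s * q)).2 ?_)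
  rintro y ⟨x, rfl⟩
  simp only
  have hs1' : 0 ≤ 1 - s := by linarith
  have hp : (x + gam * s * (p - q)) * p - f (x + gam * s * (p - q)) ≤ fs p :=
    (hfs p).1 ⟨x + gam * s * (p - q), rfl⟩
  have hq : (x + -(gam * (1 - s) * (p - q))) * q - f (x + -(gam * (1 - s) * (p - q))) ≤ fs q :=
    (hfs q).1 ⟨x + -(gam * (1 - s) * (p - q)), rfl⟩
  have hda := descent1 gam hgam f f' hd hl x (gam * s * (p - q))
  have hdb := descent1 gam hgam f f' hd hl x (-(gam * (1 - s) * (p - q)))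
  have m1 := mul_le_mul_of_nonneg_left hda hs1'
  have m2 := mul_le_mul_of_nonneg_left hdb hs0
  have m3 := mul_le_mul_of_nonneg_left hp hs1'
  have m4 := mul_le_mul_of_nonneg_left hq hs0
  have e : (1 - s) * (f x + f' x * (gam * s * (p - q)) + (gam * s * (p - q)) ^ 2 / (2 * gam))
      + s * (f x + f' x * (-(gam * (1 - s) * (p - q))) +
        (-(gam * (1 - s) * (p - q))) ^ 2 / (2 * gam))
      = f x + gam / 2 * s * (1 - s) * (p - q) ^ 2 := by
    field_simp
    ring
  have e2 : (1 - s) * ((x + gam * s * (p - q)) * p)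
      + s * ((x + -(gam * (1 - s) * (p - q))) * q)
      = x * ((1 - s) * p + s * q) + gam * s * (1 - s) * (p - q) ^ 2 := by ring
  nlinarith [m1, m2, m3, m4, e, e2]


/-- Per-coordinate dual ascent bound: fix `i` and let `Δᵢ` maximize the
one-dimensional subproblem `Δ ↦ −φᵢ*(−(αᵢ+Δ)) − (Aᵢᵀw)Δ − (vᵢ/(2λn))Δ²`. Then for every
`s ∈ [0,1]`:
`D(α + Δᵢeᵢ) − D(α) ≥ (s/n)[φᵢ*(−αᵢ) − φᵢ*(φᵢ′(Aᵢᵀw)) + (Aᵢᵀw)κᵢ]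
  − s²vᵢκᵢ²/(2λn²) + γs(1−s)κᵢ²/(2n)`,
where `κᵢ = αᵢ + φᵢ′(Aᵢᵀw)`. -/
theorem stmt7 (n d : ℕ) (hn : 1 ≤ n) (hd : 1 ≤ d)
    (A : Fin n → EuclideanSpace ℝ (Fin d))
    (v : Fin n → ℝ) (hv : ∀ i, v i = ‖A i‖ ^ 2)
    (lam gam : ℝ) (hlam : 0 < lam) (hgam : 0 < gam)
    (g : EuclideanSpace ℝ (Fin d) → ℝ)
    (hg : ∀ w₁ w₂ : EuclideanSpace ℝ (Fin d), ∀ a : ℝ, 0 ≤ a → a ≤ 1 →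
      g (a • w₁ + (1 - a) • w₂) ≤ a * g w₁ + (1 - a) * g w₂ - a * (1 - a) / 2 * ‖w₁ - w₂‖ ^ 2)
    (φ φ' : Fin n → ℝ → ℝ)
    (hφconv : ∀ i, ConvexOn ℝ Set.univ (φ i))
    (hφdiff : ∀ i x, HasDerivAt (φ i) (φ' i x) x)
    (hφlip : ∀ i, ∀ a b : ℝ, |φ' i a - φ' i b| ≤ (1 / gam) * |a - b|)
    (φs : Fin n → ℝ → ℝ)
    (hφs : ∀ i u, IsLUB (Set.range fun x : ℝ => x * u - φ i x) (φs i u))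
    (gs : EuclideanSpace ℝ (Fin d) → ℝ)
    (hgs : ∀ z, IsLUB (Set.range fun s : EuclideanSpace ℝ (Fin d) => ⟪s, z⟫_ℝ - g s) (gs z))
    (gs' : EuclideanSpace ℝ (Fin d) → EuclideanSpace ℝ (Fin d))
    (hgs' : ∀ z, HasGradientAt gs (gs' z) z)
    (hgs'lip : LipschitzWith 1 gs')
    (D : (Fin n → ℝ) → ℝ)
    (hD : ∀ β : Fin n → ℝ,
      D β = -lam * gs ((1 / (lam * n)) • (∑ i, β i • A i)) - (1 / (n : ℝ)) * ∑ i, φs i (-β i))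
    (α : Fin n → ℝ)
    (abar : EuclideanSpace ℝ (Fin d))
    (habar : abar = (1 / (lam * n)) • (∑ i, α i • A i))
    (w : EuclideanSpace ℝ (Fin d)) (hw : w = gs' abar)
    (hattain : g w + gs abar = ⟪w, abar⟫_ℝ)
    (κ : Fin n → ℝ) (hκ : ∀ i, κ i = α i + φ' i ⟪A i, w⟫_ℝ)
    (i : Fin n) (Δi : ℝ)
    (hΔi : ∀ Δ : ℝ,
      -φs i (-(α i + Δ)) - ⟪A i, w⟫_ℝ * Δ - v i / (2 * lam * n) * Δ ^ 2 ≤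
      -φs i (-(α i + Δi)) - ⟪A i, w⟫_ℝ * Δi - v i / (2 * lam * n) * Δi ^ 2)
    (s : ℝ) (hs0 : 0 ≤ s) (hs1 : s ≤ 1) :
    D (Function.update α i (α i + Δi)) - D α ≥
      (s / n) * (φs i (-α i) - φs i (φ' i ⟪A i, w⟫_ℝ) + ⟪A i, w⟫_ℝ * κ i)
        - s ^ 2 * v i * κ i ^ 2 / (2 * lam * (n : ℝ) ^ 2)
        + gam * s * (1 - s) * κ i ^ 2 / (2 * n) := by
  have hN : (0 : ℝ) < (n : ℝ) := by exact_mod_cast Nat.lt_of_lt_of_le Nat.zero_lt_one hn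
  obtain ⟨u, hu⟩ : ∃ u : ℝ, ⟪A i, w⟫_ℝ = u := ⟨_, rfl⟩
  simp only [hu] at hΔi hκ ⊢
  -- Step A : updated sum of vectors
  have hsum : ∑ j, (Function.update α i (α i + Δi)) j • A j
      = (∑ j, α j • A j) + Δi • A i := by
    have h1 : ∀ j : Fin n, (Function.update α i (α i + Δi)) j • A j
        = α j • A j + (if j = i then Δi • A i else 0) := by
      intro j
      by_cases hji : j = i
      · subst hji
        simp [Function.update_self, add_smul]
      · simp [Function.update_of_ne hji, hji]
    rw [Finset.sum_congr rfl fun j _ => h1 j, Finset.sum_add_distrib,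
      Finset.sum_ite_eq' Finset.univ i (fun _ => Δi • A i)]
    simp
  -- Step B : updated scalar sum
  have hsum2 : ∑ j, φs j (-(Function.update α i (α i + Δi)) j)
      = (∑ j, φs j (-α j)) + (φs i (-(α i + Δi)) - φs i (-α i)) := by
    have h1 : ∀ j : Fin n, φs j (-(Function.update α i (α i + Δi)) j)
        = φs j (-α j) + (if j = i then φs i (-(α i + Δi)) - φs i (-α i) else 0) := by
      intro j
      by_cases hji : j = i
      · subst hji
        simp [Function.update_self]
      · simp [Function.update_of_ne hji, hji]
    rw [Finset.sum_congr rfl fun j _ => h1 j, Finset.sum_add_distrib,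
      Finset.sum_ite_eq' Finset.univ i (fun _ => φs i (-(α i + Δi)) - φs i (-α i))]
    simp
  -- Step C : new dual average point
  have habar' : (1 / (lam * (n : ℝ))) • (∑ j, (Function.update α i (α i + Δi)) j • A j)
      = abar + (Δi / (lam * (n : ℝ))) • A i := by
    rw [hsum, smul_add, ← habar, smul_smul]
    congr 2
    ring
  -- Step D : descent lemma for gs
  have hdesc := descent2 gs gs' hgs' hgs'lip abar ((Δi / (lam * (n : ℝ))) • A i)
  have hip : ⟪gs' abar, (Δi / (lam * (n : ℝ))) • A i⟫_ℝ = (Δi / (lam * (n : ℝ))) * u := by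
    rw [real_inner_smul_right, ← hw, real_inner_comm, hu]
  have hnorm : ‖(Δi / (lam * (n : ℝ))) • A i‖ ^ 2 = (Δi / (lam * (n : ℝ))) ^ 2 * v i := by
    rw [norm_smul, mul_pow, Real.norm_eq_abs, sq_abs, hv]
  rw [hip, hnorm] at hdesc
  -- Step E : dual difference formula
  have hDdiff : D (Function.update α i (α i + Δi)) - D α
      = -lam * (gs (abar + (Δi / (lam * (n : ℝ))) • A i) - gs abar)
        - (1 / (n : ℝ)) * (φs i (-(α i + Δi)) - φs i (-α i)) := by
    rw [hD, hD, hsum2, habar', ← habar]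
    ring
  -- Step F : lower bound via the one-dimensional objective
  have key1 : D (Function.update α i (α i + Δi)) - D α ≥
      (1 / (n : ℝ)) * ((-φs i (-(α i + Δi)) - u * Δi - v i / (2 * lam * (n : ℝ)) * Δi ^ 2)
        + φs i (-α i)) := by
    rw [hDdiff]
    have hmul := mul_le_mul_of_nonneg_left hdesc hlam.le
    have hid : lam * (gs abar + Δi / (lam * ↑n) * u + (Δi / (lam * ↑n)) ^ 2 * v i / 2)
        = lam * gs abar + (1 / (n : ℝ)) * (u * Δi + v i / (2 * lam * (n : ℝ)) * Δi ^ 2) := by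
      field_simp
      ring
    rw [hid] at hmul
    linarith
  -- Step G : optimality of Δi
  have hopt := hΔi (-(s * κ i))
  -- Step H : strong convexity of the conjugate
  have hsc := conj_sc gam hgam (φ i) (φ' i) (hφdiff i) (hφlip i) (φs i) (hφs i)
    (-α i) (φ' i u) s hs0 hs1
  have hκi : κ i = α i + φ' i u := by rw [hκ i, hu]
  have harg : (1 - s) * (-α i) + s * (φ' i u) = -(α i + -(s * κ i)) := by
    rw [hκi]; ring
  have hpq : (-α i - φ' i u) ^ 2 = κ i ^ 2 := by rw [hκi]; ring
  rw [harg] at hsc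
  have hsc' : φs i (-(α i + -(s * κ i))) ≤ (1 - s) * φs i (-α i) + s * φs i (φ' i u)
      - gam / 2 * s * (1 - s) * κ i ^ 2 := by
    rw [← hpq]; exact hsc
  -- Step I : assemble
  have key2 : (-φs i (-(α i + Δi)) - u * Δi - v i / (2 * lam * (n : ℝ)) * Δi ^ 2)
      + φs i (-α i) ≥
      s * (φs i (-α i) - φs i (φ' i u) + u * κ i)
        - v i / (2 * lam * (n : ℝ)) * (s ^ 2 * κ i ^ 2)
        + gam / 2 * s * (1 - s) * κ i ^ 2 := by
    have e1 : (-(s * κ i)) ^ 2 = s ^ 2 * κ i ^ 2 := by ring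
    rw [e1] at hopt
    linarith [hopt, hsc']
  have hfinal : (1 / (n : ℝ)) * (s * (φs i (-α i) - φs i (φ' i u) + u * κ i)
        - v i / (2 * lam * (n : ℝ)) * (s ^ 2 * κ i ^ 2)
        + gam / 2 * s * (1 - s) * κ i ^ 2)
      = (s / (n : ℝ)) * (φs i (-α i) - φs i (φ' i u) + u * κ i)
        - s ^ 2 * v i * κ i ^ 2 / (2 * lam * (n : ℝ) ^ 2)
        + gam * s * (1 - s) * κ i ^ 2 / (2 * (n : ℝ)) := by
    field_simp
  have hmono := mul_le_mul_of_nonneg_left key2 (le_of_lt (by positivity : (0:ℝ) < 1 / (n : ℝ)))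
  rw [hfinal] at hmono
  linarith
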